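/- Let M ⊆ B be the family of monomials among Boolean functions on {0,1}^n. The set of pseudo-Boolean functions f : {0,1}^n → ℝ with lc_G(f) < 2^n - n - 1, for any family G with M ⊆ G ⊆ B, is a Lebesgue null set in the 2^n-dimensional vector space of all pseudo-Boolean functions on {0,1}^n (identified with ℝ^{2^n} via the values f(x̄), x̄ ∈ {0,1}^n). -/

import Mathlib

open Finset MeasureTheory

/-- Coercion of a Boolean value to a real number. -/
def bval (b : Bool) : ℝ := if b then 1 else 0

/-- `f : {0,1}^n → ℝ` admits a linearization of size `k` with respect to `G`. -/
def HasLinB {n : ℕ} (G : Set ((Fin n → Bool) → ℝ)) (f : (Fin n → Bool) → ℝ) (k : ℕ) : Prop :=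
  ∃ (g : Fin k → (Fin n → Bool) → ℝ) (a : Fin n → ℝ) (β : ℝ) (b : Fin k → ℝ),
    (∀ i, g i ∈ G) ∧ ∀ x : Fin n → Bool,
      f x = ∑ i, a i * bval (x i) + β + ∑ i, b i * g i x

/-- The linearization complexity of `f` with respect to `G`. -/
noncomputable def lcB {n : ℕ} (G : Set ((Fin n → Bool) → ℝ)) (f : (Fin n → Bool) → ℝ) : ℕ∞ :=
  sInf {k : ℕ∞ | ∃ m : ℕ, k = (m : ℕ∞) ∧ HasLinB G f m}

/-- The family of all Boolean functions. -/
def BoolFamB (n : ℕ) : Set ((Fin n → Bool) → ℝ) :=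
  {g | ∀ x : Fin n → Bool, g x = 0 ∨ g x = 1}

/-- The family of monomials of degree at least 2. -/
def MonomialsB (n : ℕ) : Set ((Fin n → Bool) → ℝ) :=
  {g | ∃ I : Finset (Fin n), 2 ≤ I.card ∧ g = fun x => ∏ i ∈ I, bval (x i)}


open Classical in
noncomputable def tbB (r : ℝ) : Bool := if r = 1 then true else false

lemma bval_tbB {r : ℝ} (h : r = 0 ∨ r = 1) : bval (tbB r) = r := by
  rcases h with h | h <;> simp [tbB, bval, h]

noncomputable def vecB (n m : ℕ) (h : Fin m → ((Fin n → Bool) → Bool)) :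
    (Fin n ⊕ Unit) ⊕ Fin m → ((Fin n → Bool) → ℝ) :=
  Sum.elim (Sum.elim (fun j x => bval (x j)) (fun _ _ => 1)) (fun i x => bval (h i x))

theorem small_lc_is_null_set {n : ℕ} (G : Set ((Fin n → Bool) → ℝ))
    (hMG : MonomialsB n ⊆ G) (hGB : G ⊆ BoolFamB n) :
    volume {f : (Fin n → Bool) → ℝ | lcB G f < ((2 ^ n - n - 1 : ℕ) : ℕ∞)} = 0 := by
  set N := 2 ^ n - n - 1 with hNdef
  have key : {f : (Fin n → Bool) → ℝ | lcB G f < (N : ℕ∞)} ⊆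
      ⋃ m : ℕ, ⋃ _ : m < N, ⋃ h : Fin m → ((Fin n → Bool) → Bool),
        (Submodule.span ℝ (Set.range (vecB n m h)) : Set ((Fin n → Bool) → ℝ)) := by
    intro f hf
    simp only [Set.mem_setOf_eq, lcB] at hf
    rw [sInf_lt_iff] at hf
    obtain ⟨k, ⟨m, rfl, hlin⟩, hk⟩ := hf
    have hm : m < N := by exact_mod_cast hk
    obtain ⟨g, a, β, b, hgG, heq⟩ := hlin
    refine Set.mem_iUnion.2 ⟨m, Set.mem_iUnion.2 ⟨hm, Set.mem_iUnion.2 ⟨fun i x => tbB (g i x), ?_⟩⟩⟩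
    have hfe : f = (∑ j : Fin n, a j • vecB n m (fun i x => tbB (g i x)) (.inl (.inl j)))
        + β • vecB n m (fun i x => tbB (g i x)) (.inl (.inr ()))
        + ∑ i : Fin m, b i • vecB n m (fun i x => tbB (g i x)) (.inr i) := by
      funext x
      have : ∀ i, bval (tbB (g i x)) = g i x := fun i => bval_tbB (hGB (hgG i) x)
      simp only [Pi.add_apply, Finset.sum_apply, Pi.smul_apply, vecB, Sum.elim_inl,
        Sum.elim_inr, smul_eq_mul, this, heq x, mul_one]
    rw [hfe]
    refine Submodule.add_mem _ (Submodule.add_mem _ ?_ ?_) ?_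
    · exact Submodule.sum_mem _ fun j _ => Submodule.smul_mem _ _
        (Submodule.subset_span ⟨.inl (.inl j), rfl⟩)
    · exact Submodule.smul_mem _ _ (Submodule.subset_span ⟨.inl (.inr ()), rfl⟩)
    · exact Submodule.sum_mem _ fun i _ => Submodule.smul_mem _ _
        (Submodule.subset_span ⟨.inr i, rfl⟩)
  refine measure_mono_null key ?_
  refine measure_iUnion_null fun m => measure_iUnion_null fun hm => measure_iUnion_null fun h => ?_
  refine Measure.addHaar_submodule _ _ ?_
  intro htop
  have hle := finrank_le_of_span_eq_top htop
  have hrank : Module.finrank ℝ ((Fin n → Bool) → ℝ) = 2 ^ n := by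
    rw [Module.finrank_fintype_fun_eq_card]
    simp [Fintype.card_fun]
  have hnp : n < 2 ^ n := Nat.lt_two_pow_self
  simp only [Fintype.card_sum, Fintype.card_fin, Fintype.card_unit, hrank] at hle
  omega
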